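/- Let V be a finite-dimensional real vector space, B a positive-definite symmetric bilinear form on V, and β₁,…,β_m nonzero linear functionals on V. Let C be a connected component of the open set {ζ ∈ V : β_j(ζ) ≠ 0 for all j}. Then the function f(ζ) = (1/2)·B(ζ,ζ) − Σ_{j=1}^m log|β_j(ζ)| has compact sublevel sets in C: for every M ∈ ℝ, the set {ζ ∈ C : f(ζ) ≤ M} is compact. In particular, f(ζ_n) → ∞ along any sequence ζ_n ∈ C with ‖ζ_n‖ → ∞ or with ζ_n converging to a point where some β_j vanishes. -/

import Mathlib

open Filter

/-- Coercivity: on a connected component `C` of the complement of the hyperplanes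
`β_j = 0`, the function `f(ζ) = ½·B(ζ,ζ) - Σ_j log |β_j(ζ)|` has compact sublevel sets;
in particular `f(ζ_n) → ∞` along any sequence in `C` whose norms tend to `∞` or which
converges to a point where some `β_j` vanishes. -/
theorem compact_sublevel_sets_log_potential {V : Type*} [NormedAddCommGroup V]
    [NormedSpace ℝ V] [FiniteDimensional ℝ V]
    (B : LinearMap.BilinForm ℝ V) (hBsymm : ∀ x y, B x y = B y x)
    (hBpos : ∀ ζ : V, ζ ≠ 0 → 0 < B ζ ζ)
    (m : ℕ) (β : Fin m → (V →ₗ[ℝ] ℝ)) (hβ : ∀ j, β j ≠ 0)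
    (C : Set V) (x₀ : V) (hx₀ : x₀ ∈ {ζ : V | ∀ j, β j ζ ≠ 0})
    (hC : C = connectedComponentIn {ζ : V | ∀ j, β j ζ ≠ 0} x₀) :
    (∀ M : ℝ,
      IsCompact {ζ ∈ C | (1 / 2) * B ζ ζ - ∑ j, Real.log |β j ζ| ≤ M}) ∧
      ∀ ζs : ℕ → V, (∀ n, ζs n ∈ C) →
        (Tendsto (fun n => ‖ζs n‖) atTop atTop ∨
          ∃ ζ' : V, (∃ j, β j ζ' = 0) ∧ Tendsto ζs atTop (nhds ζ')) →
        Tendsto (fun n => (1 / 2) * B (ζs n) (ζs n) - ∑ j, Real.log |β j (ζs n)|)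
          atTop atTop := by
  set U : Set V := {ζ : V | ∀ j, β j ζ ≠ 0} with hU
  set F : V → ℝ := fun ζ => (1 / 2) * B ζ ζ - ∑ j, Real.log |β j ζ| with hF
  -- basic continuity facts
  have hβc : ∀ j, Continuous (β j) := fun j => (β j).continuous_of_finiteDimensional
  have hUopen : IsOpen U := by
    have : U = ⋂ j, (β j) ⁻¹' ({0}ᶜ) := by
      ext ζ; simp [hU, Set.mem_iInter]
    rw [this]
    exact isOpen_iInter_of_finite fun j => (isOpen_compl_singleton).preimage (hβc j)
  have hCU : C ⊆ U := hC ▸ connectedComponentIn_subset U x₀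
  have hq : Continuous fun ζ : V => B ζ ζ := by
    set L : V →ₗ[ℝ] (V →L[ℝ] ℝ) :=
      (LinearMap.toContinuousLinearMap : (V →ₗ[ℝ] ℝ) ≃ₗ[ℝ] (V →L[ℝ] ℝ)).toLinearMap ∘ₗ B
      with hLdef
    have hL : Continuous L := L.continuous_of_finiteDimensional
    have heq : (fun ζ : V => B ζ ζ) = fun ζ => (L ζ) ζ := by
      ext ζ; simp [hLdef]
    rw [heq]
    exact isBoundedBilinearMap_apply.continuous.comp (hL.prodMk continuous_id)
  have hBnonneg : ∀ ζ : V, 0 ≤ B ζ ζ := by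
    intro ζ
    by_cases h : ζ = 0
    · simp [h]
    · exact (hBpos ζ h).le
  -- continuity of F on U
  have hFcont : ∀ ζ ∈ U, ContinuousAt F ζ := by
    intro ζ hζ
    apply ContinuousAt.sub
    · exact (hq.continuousAt).const_mul _
    · have : ContinuousAt (fun ζ' => ∑ j, Real.log |β j ζ'|) ζ := by
        apply tendsto_finset_sum
        intro j _
        have h0 : |β j ζ| ≠ 0 := abs_ne_zero.2 (hζ j)
        exact ContinuousAt.log ((hβc j).abs.continuousAt) h0
      exact this
  -- quadratic lower bound
  obtain ⟨c, hcpos, hclow⟩ : ∃ c > 0, ∀ ζ : V, c * ‖ζ‖ ^ 2 ≤ B ζ ζ := by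
    rcases subsingleton_or_nontrivial V with h | h
    · refine ⟨1, one_pos, fun ζ => ?_⟩
      have : ζ = 0 := Subsingleton.elim ζ 0
      simp [this]
    · have hs : (Metric.sphere (0 : V) 1).Nonempty :=
        NormedSpace.sphere_nonempty.2 zero_le_one
      obtain ⟨u, hu, hmin⟩ :=
        (isCompact_sphere (0 : V) 1).exists_isMinOn hs hq.continuousOn
      have hu1 : ‖u‖ = 1 := by simpa using hu
      have hune : u ≠ 0 := by
        intro h0; rw [h0, norm_zero] at hu1; norm_num at hu1
      refine ⟨B u u, hBpos u hune, fun ζ => ?_⟩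
      by_cases h0 : ζ = 0
      · simp [h0]
      · have hn : (0 : ℝ) < ‖ζ‖ := norm_pos_iff.2 h0
        set u' : V := ‖ζ‖⁻¹ • ζ with hu'
        have hu'mem : u' ∈ Metric.sphere (0 : V) 1 := by
          simp [hu', norm_smul, abs_of_pos (inv_pos.2 hn), inv_mul_cancel₀ hn.ne']
        have hζ : ζ = ‖ζ‖ • u' := by
          rw [hu', smul_smul, mul_inv_cancel₀ hn.ne', one_smul]
        have hBval : B ζ ζ = ‖ζ‖ ^ 2 * B u' u' := by
          conv_lhs => rw [hζ]
          simp [map_smul, LinearMap.smul_apply, smul_eq_mul]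
          ring
        rw [hBval]
        have hle : B u u ≤ B u' u' := hmin hu'mem
        calc B u u * ‖ζ‖ ^ 2 = ‖ζ‖ ^ 2 * B u u := by ring
          _ ≤ ‖ζ‖ ^ 2 * B u' u' := mul_le_mul_of_nonneg_left hle (sq_nonneg _)
  -- upper bound on |β j ζ|
  obtain ⟨D, hD1, hDb⟩ : ∃ D ≥ 1, ∀ (j : Fin m) (ζ : V), |β j ζ| ≤ D * (‖ζ‖ + 1) := by
    set g : Fin m → (V →L[ℝ] ℝ) := fun j => LinearMap.toContinuousLinearMap (β j) with hg
    refine ⟨1 + ∑ j, ‖g j‖, le_add_of_nonneg_right (Finset.sum_nonneg fun j _ => norm_nonneg _),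
      fun j ζ => ?_⟩
    have h1 : |β j ζ| ≤ ‖g j‖ * ‖ζ‖ := by
      have := (g j).le_opNorm ζ
      simpa [hg] using this
    have h2 : ‖g j‖ ≤ 1 + ∑ j, ‖g j‖ := by
      have : ‖g j‖ ≤ ∑ j, ‖g j‖ :=
        Finset.single_le_sum (fun j _ => norm_nonneg (g j)) (Finset.mem_univ j)
      linarith
    calc |β j ζ| ≤ ‖g j‖ * ‖ζ‖ := h1
      _ ≤ (1 + ∑ j, ‖g j‖) * (‖ζ‖ + 1) := by
          apply mul_le_mul h2 (by linarith [norm_nonneg ζ]) (norm_nonneg ζ)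
          positivity
  -- blow-up near a zero of some β j
  have hblow : ∀ ζ' : V, (∃ j, β j ζ' = 0) → Tendsto F (nhdsWithin ζ' U) atTop := by
    intro ζ' ⟨j, hj⟩
    set R : ℝ := ‖ζ'‖ + 1 with hR
    set D' : ℝ := D * (R + 1) with hD'
    set K0 : ℝ := max (Real.log D') 0 with hK0
    have hK0nonneg : 0 ≤ K0 := le_max_right _ _
    have hlowbd : ∀ ζ'' ∈ Metric.ball ζ' 1 ∩ U,
        -Real.log |β j ζ''| - (m : ℝ) * K0 ≤ F ζ'' := by
      intro ζ'' ⟨hb, hu⟩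
      have hnorm : ‖ζ''‖ ≤ R := by
        have := norm_sub_norm_le ζ'' ζ'
        have hd : ‖ζ'' - ζ'‖ < 1 := by
          rw [← dist_eq_norm]; exact Metric.mem_ball.1 hb
        rw [hR]; linarith
      have hterm : ∀ k : Fin m, Real.log |β k ζ''| ≤ K0 := by
        intro k
        have hpos : 0 < |β k ζ''| := abs_pos.2 (hu k)
        have : |β k ζ''| ≤ D' := by
          calc |β k ζ''| ≤ D * (‖ζ''‖ + 1) := hDb k ζ''
            _ ≤ D * (R + 1) := by nlinarith
        calc Real.log |β k ζ''| ≤ Real.log D' := Real.log_le_log hpos this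
          _ ≤ K0 := le_max_left _ _
      have hsum : ∑ k, Real.log |β k ζ''| ≤ Real.log |β j ζ''| + (m : ℝ) * K0 := by
        rw [← Finset.add_sum_erase Finset.univ (fun k => Real.log |β k ζ''|)
          (Finset.mem_univ j)]
        have herase : ∑ k ∈ Finset.univ.erase j, Real.log |β k ζ''| ≤
            (Finset.univ.erase j).card • K0 :=
          Finset.sum_le_card_nsmul _ _ _ (fun k _ => hterm k)
        have hcard : ((Finset.univ.erase j).card : ℝ) ≤ (m : ℝ) := by
          have : (Finset.univ.erase j).card ≤ m := by
            calc (Finset.univ.erase j).card ≤ Finset.univ.card :=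
                Finset.card_le_card (Finset.erase_subset _ _)
              _ = m := by simp
          exact_mod_cast this
        have : ((Finset.univ.erase j).card : ℝ) * K0 ≤ (m : ℝ) * K0 :=
          mul_le_mul_of_nonneg_right hcard hK0nonneg
        rw [nsmul_eq_mul] at herase
        linarith
      have hB0 : 0 ≤ (1 / 2) * B ζ'' ζ'' := by
        have := hBnonneg ζ''; linarith
      simp only [hF]
      linarith
    have h1 : Tendsto (fun ζ'' => |β j ζ''|) (nhdsWithin ζ' U) (nhdsWithin 0 (Set.Ioi 0)) := by
      rw [tendsto_nhdsWithin_iff]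
      constructor
      · have : Tendsto (fun ζ'' => |β j ζ''|) (nhds ζ') (nhds |β j ζ'|) :=
          ((hβc j).abs.tendsto ζ')
        rw [hj, abs_zero] at this
        exact this.mono_left nhdsWithin_le_nhds
      · filter_upwards [self_mem_nhdsWithin] with ζ'' hu
        exact abs_pos.2 (hu j)
    have h2 : Tendsto (fun ζ'' => -Real.log |β j ζ''|) (nhdsWithin ζ' U) atTop := by
      have := Real.tendsto_log_nhdsGT_zero.comp h1
      exact tendsto_neg_atBot_atTop.comp this
    have h3 : Tendsto (fun ζ'' => -Real.log |β j ζ''| - (m : ℝ) * K0)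
        (nhdsWithin ζ' U) atTop := tendsto_atTop_add_const_right _ _ h2
    apply tendsto_atTop_mono' _ _ h3
    have hmem : Metric.ball ζ' 1 ∩ U ∈ nhdsWithin ζ' U :=
      Filter.inter_mem (mem_nhdsWithin_of_mem_nhds (Metric.ball_mem_nhds ζ' one_pos))
        self_mem_nhdsWithin
    filter_upwards [hmem] with ζ'' h using hlowbd ζ'' h
  -- growth function
  have hgrow : Tendsto (fun t : ℝ => (c / 2) * t ^ 2 - (m : ℝ) * t - (m : ℝ) * Real.log D)
      atTop atTop := by
    have h1 : Tendsto (fun t : ℝ => t * ((c / 2) * t - (m : ℝ)) - (m : ℝ) * Real.log D)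
        atTop atTop := by
      apply tendsto_atTop_add_const_right
      exact tendsto_id.atTop_mul_atTop₀
        (tendsto_atTop_add_const_right _ _
          ((tendsto_const_mul_atTop_of_pos (half_pos hcpos)).2 tendsto_id))
    exact h1.congr (fun t => by ring)
  -- lower bound for F via norm
  have hFlow : ∀ ζ ∈ U,
      (c / 2) * ‖ζ‖ ^ 2 - (m : ℝ) * ‖ζ‖ - (m : ℝ) * Real.log D ≤ F ζ := by
    intro ζ hζ
    have hq2 : (c / 2) * ‖ζ‖ ^ 2 ≤ (1 / 2) * B ζ ζ := by
      have := hclow ζ; linarith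
    have hsum : ∑ k, Real.log |β k ζ| ≤ (m : ℝ) * (Real.log D + ‖ζ‖) := by
      have hterm : ∀ k : Fin m, Real.log |β k ζ| ≤ Real.log D + ‖ζ‖ := by
        intro k
        have hpos : 0 < |β k ζ| := abs_pos.2 (hζ k)
        have hDpos : (0 : ℝ) < D := lt_of_lt_of_le one_pos hD1
        have hlog : Real.log |β k ζ| ≤ Real.log (D * (‖ζ‖ + 1)) :=
          Real.log_le_log hpos (hDb k ζ)
        rw [Real.log_mul hDpos.ne' (by positivity)] at hlog
        have : Real.log (‖ζ‖ + 1) ≤ ‖ζ‖ := by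
          have := Real.log_le_sub_one_of_pos (show (0:ℝ) < ‖ζ‖ + 1 by positivity)
          linarith
        linarith
      calc ∑ k, Real.log |β k ζ| ≤ Finset.univ.card • (Real.log D + ‖ζ‖) :=
          Finset.sum_le_card_nsmul _ _ _ (fun k _ => hterm k)
        _ = (m : ℝ) * (Real.log D + ‖ζ‖) := by
            rw [nsmul_eq_mul]; simp
    simp only [hF]
    linarith
  -- Part 1: compactness
  have hcompact : ∀ M : ℝ, IsCompact {ζ ∈ C | F ζ ≤ M} := by
    intro M
    set S : Set V := {ζ ∈ C | F ζ ≤ M} with hS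
    have hSU : S ⊆ U := fun ζ hζ => hCU hζ.1
    -- bounded
    have hbdd : Bornology.IsBounded S := by
      rw [isBounded_iff_forall_norm_le]
      obtain ⟨R, hR⟩ := (eventually_atTop.1 (hgrow.eventually (eventually_gt_atTop M)))
      refine ⟨max R 0, fun ζ hζ => ?_⟩
      by_contra hcon
      push_neg at hcon
      have hRζ : R ≤ ‖ζ‖ := le_of_lt (lt_of_le_of_lt (le_max_left R 0) hcon)
      have h1 := hR ‖ζ‖ hRζ
      have h2 := hFlow ζ (hSU hζ)
      have h3 : F ζ ≤ M := hζ.2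
      exact absurd h1 (not_lt.2 (h2.trans h3))
    -- closed
    have hclosed : IsClosed S := by
      apply IsSeqClosed.isClosed
      intro xn p hxs hxl
      have hxU : ∀ n, xn n ∈ U := fun n => hSU (hxs n)
      -- p ∈ U
      have hpU : p ∈ U := by
        by_contra hcon
        have hz : ∃ j, β j p = 0 := by
          simp only [hU, Set.mem_setOf_eq] at hcon
          push_neg at hcon
          exact hcon
        have hten : Tendsto xn atTop (nhdsWithin p U) := by
          rw [tendsto_nhdsWithin_iff]
          exact ⟨hxl, Eventually.of_forall hxU⟩
        have hFt : Tendsto (F ∘ xn) atTop atTop := (hblow p hz).comp hten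
        obtain ⟨n, hn⟩ := (hFt.eventually (eventually_gt_atTop M)).exists
        have := (hxs n).2
        simp only [Function.comp] at hn
        linarith
      -- p ∈ C
      have hpC : p ∈ C := by
        obtain ⟨ε, hεpos, hball⟩ := Metric.isOpen_iff.1 hUopen p hpU
        obtain ⟨n, hn⟩ := (hxl.eventually (Metric.ball_mem_nhds p hεpos)).exists
        have hconn : Metric.ball p ε ⊆ connectedComponentIn U (xn n) :=
          (convex_ball p ε).isPreconnected.subset_connectedComponentIn hn hball
        have hcomp : C = connectedComponentIn U (xn n) := by
          rw [hC]
          exact connectedComponentIn_eq (hC ▸ (hxs n).1)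
        rw [hcomp]
        exact hconn (Metric.mem_ball_self hεpos)
      refine ⟨hpC, ?_⟩
      have hFc : Tendsto (F ∘ xn) atTop (nhds (F p)) :=
        ((hFcont p hpU).tendsto).comp hxl
      exact le_of_tendsto hFc (Eventually.of_forall fun n => (hxs n).2)
    exact Metric.isCompact_of_isClosed_isBounded hclosed hbdd
  constructor
  · exact hcompact
  -- Part 2
  · intro ζs hζs hcases
    have hgoal : Tendsto (F ∘ ζs) atTop atTop := by
      by_contra hcon
      rw [tendsto_atTop] at hcon
      push_neg at hcon
      obtain ⟨b, hb⟩ := hcon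
      have hb' : ∃ᶠ n in atTop, F (ζs n) ≤ b := by
        apply hb.mono
        intro n hn
        exact hn.le
      obtain ⟨φ, hφ, hφb⟩ := extraction_of_frequently_atTop hb'
      have hmem : ∀ n, ζs (φ n) ∈ {ζ ∈ C | F ζ ≤ b} := fun n => ⟨hζs _, hφb n⟩
      obtain ⟨a, ha, ψ, hψ, hconv⟩ := (hcompact b).tendsto_subseq hmem
      rcases hcases with hnorm | ⟨ζ', ⟨j, hj⟩, hlim⟩
      · have t1 : Tendsto (fun n => ‖ζs (φ (ψ n))‖) atTop atTop :=
          hnorm.comp ((hφ.comp hψ).tendsto_atTop)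
        have t2 : Tendsto (fun n => ‖ζs (φ (ψ n))‖) atTop (nhds ‖a‖) :=
          ((continuous_norm.tendsto a).comp hconv)
        exact not_tendsto_atTop_of_tendsto_nhds t2 t1
      · have t1 : Tendsto (fun n => ζs (φ (ψ n))) atTop (nhds ζ') :=
          hlim.comp ((hφ.comp hψ).tendsto_atTop)
        have : a = ζ' := tendsto_nhds_unique hconv t1
        subst this
        exact (hCU ha.1) j hj
    exact hgoal
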